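/- Let n, l ∈ ℕ and let g : ℝⁿ → ℝ be an infinitely differentiable function. Define f : ℝⁿ → ℝ by f(x) = ∫₀¹ s^l · g(s • x) ds. Then f is infinitely differentiable and for every x ∈ ℝⁿ it satisfies the radial transport equation Df(x)(x) + (l+1) · f(x) = g(x), where Df(x)(x) denotes the Fréchet derivative of f at x evaluated on the vector x (i.e. x · ∇f(x)). -/

import Mathlib

open intervalIntegral MeasureTheory Metric
open scoped ContDiff

set_option maxHeartbeats 1000000
set_option synthInstance.maxHeartbeats 200000

/-- Key derivative computation: the parametric integral has the expected Fréchet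
derivative. -/
lemma radial_hasFDerivAt {n : ℕ} {F : Type} [NormedAddCommGroup F] [NormedSpace ℝ F]
    [CompleteSpace F] (g : (Fin n → ℝ) → F) (hg : ContDiff ℝ (⊤ : ℕ∞) g) (l : ℕ)
    (x₀ : Fin n → ℝ) :
    HasFDerivAt (fun x => ∫ s in (0:ℝ)..1, s ^ l • g (s • x))
      (∫ s in (0:ℝ)..1, s ^ (l + 1) • fderiv ℝ g (s • x₀)) x₀ := by
  have hgc : Continuous g := hg.continuous
  have hgd : Differentiable ℝ g := hg.differentiable (by simp)
  have hg' : Continuous (fderiv ℝ g) := (hg.fderiv_right (m := ∞) (by simp)).continuous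
  -- bound for the derivative on a compact ball
  obtain ⟨C, hC⟩ := (isCompact_closedBall (0 : Fin n → ℝ) (‖x₀‖ + 1)).exists_bound_of_continuousOn
    hg'.continuousOn
  have key : ∀ s : ℝ, s ∈ Set.Ioc (0:ℝ) 1 → ∀ x ∈ ball x₀ 1,
      HasFDerivAt (fun y => s ^ l • g (s • y)) (s ^ (l + 1) • fderiv ℝ g (s • x)) x := by
    intro s hs x hx
    have hlin : HasFDerivAt (fun y : Fin n → ℝ => s • y)
        (s • ContinuousLinearMap.id ℝ (Fin n → ℝ)) x :=
      (s • ContinuousLinearMap.id ℝ (Fin n → ℝ)).hasFDerivAt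
    have hcomp := ((hgd (s • x)).hasFDerivAt.comp x hlin).const_smul (s ^ l)
    refine hcomp.congr_fderiv ?_
    ext y
    simp [pow_succ, mul_comm, mul_assoc, smul_smul, mul_left_comm]
  have hmem : ∀ s : ℝ, s ∈ Set.Ioc (0:ℝ) 1 → ∀ x ∈ ball x₀ 1,
      s • x ∈ closedBall (0 : Fin n → ℝ) (‖x₀‖ + 1) := by
    intro s hs x hx
    rw [mem_closedBall, dist_zero_right, norm_smul, Real.norm_eq_abs,
      abs_of_pos hs.1]
    have hx1 : ‖x‖ ≤ ‖x₀‖ + 1 := by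
      have h1 := mem_ball_iff_norm.mp hx
      have h2 := norm_sub_norm_le x x₀
      linarith
    calc s * ‖x‖ ≤ 1 * ‖x‖ := mul_le_mul_of_nonneg_right hs.2 (norm_nonneg x)
      _ ≤ ‖x₀‖ + 1 := by simpa using hx1
  have huIoc : Set.uIoc (0:ℝ) 1 = Set.Ioc (0:ℝ) 1 := by
    rw [Set.uIoc_of_le (by norm_num : (0:ℝ) ≤ 1)]
  apply intervalIntegral.hasFDerivAt_integral_of_dominated_of_fderiv_le
    (F' := fun x s => s ^ (l + 1) • fderiv ℝ g (s • x)) (bound := fun _ => |C|)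
    (s := ball x₀ 1) (ball_mem_nhds x₀ one_pos)
  · filter_upwards with x
    exact ((continuous_pow l).smul (hgc.comp (continuous_id.smul continuous_const))).aestronglyMeasurable
  · exact ((continuous_pow l).smul (hgc.comp (continuous_id.smul continuous_const))).intervalIntegrable _ _
  · exact ((continuous_pow (l+1)).smul (hg'.comp (continuous_id.smul continuous_const))).aestronglyMeasurable
  · filter_upwards with s hs x hx
    rw [huIoc] at hs
    have h0 := norm_smul_le (s ^ (l + 1)) (fderiv ℝ g (s • x))
    have h1 : ‖s ^ (l + 1)‖ ≤ 1 := by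
      rw [Real.norm_eq_abs, abs_pow, abs_of_pos hs.1]
      exact pow_le_one₀ hs.1.le hs.2
    have h2 : ‖fderiv ℝ g (s • x)‖ ≤ C := hC _ (hmem s hs x hx)
    have h3 : C ≤ |C| := le_abs_self C
    nlinarith [norm_nonneg (fderiv ℝ g (s • x)), norm_nonneg (s ^ (l+1) : ℝ)]
  · exact intervalIntegrable_const
  · filter_upwards with s hs x hx
    rw [huIoc] at hs
    exact key s hs x hx

/-- Smoothness of the parametric integral, by induction on the order of smoothness. -/
lemma radial_contDiff {n : ℕ} : ∀ (m : ℕ) {F : Type} [NormedAddCommGroup F]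
    [NormedSpace ℝ F] [CompleteSpace F] (g : (Fin n → ℝ) → F), ContDiff ℝ (⊤ : ℕ∞) g →
    ∀ l : ℕ, ContDiff ℝ (m : WithTop ℕ∞) (fun x => ∫ s in (0:ℝ)..1, s ^ l • g (s • x)) := by
  intro m
  induction m with
  | zero =>
    intro F _ _ _ g hg l
    rw [Nat.cast_zero, contDiff_zero]
    exact continuous_iff_continuousAt.mpr fun x => ((radial_hasFDerivAt g hg l x).differentiableAt).continuousAt
  | succ m ih =>
    intro F _ _ _ g hg l
    have hfd : (fderiv ℝ fun x => ∫ s in (0:ℝ)..1, s ^ l • g (s • x)) =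
        fun x => ∫ s in (0:ℝ)..1, s ^ (l + 1) • fderiv ℝ g (s • x) := by
      funext x
      exact (radial_hasFDerivAt g hg l x).fderiv
    rw [show ((m + 1 : ℕ) : WithTop ℕ∞) = ((m : WithTop ℕ∞) + 1) by push_cast; rfl]
    rw [contDiff_succ_iff_fderiv]
    refine ⟨fun x => (radial_hasFDerivAt g hg l x).differentiableAt, by simp, ?_⟩
    rw [hfd]
    exact ih (fderiv ℝ g) (hg.fderiv_right (m := ∞) (by simp)) (l + 1)

/-- The function `f x = ∫₀¹ sˡ g(s • x) ds` is smooth and solves the radial transport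
equation `Df(x)(x) + (l+1) f(x) = g(x)`. -/
theorem radial_transport_solution
    (n l : ℕ) (g : (Fin n → ℝ) → ℝ) (hg : ContDiff ℝ (⊤ : ℕ∞) g)
    (f : (Fin n → ℝ) → ℝ)
    (hf : f = fun x => ∫ s in (0:ℝ)..1, s ^ l * g (s • x)) :
    ContDiff ℝ (⊤ : ℕ∞) f ∧
      ∀ x : Fin n → ℝ, fderiv ℝ f x x + (l + 1 : ℝ) * f x = g x := by
  have hf' : f = fun x => ∫ s in (0:ℝ)..1, s ^ l • g (s • x) := by
    simpa [smul_eq_mul] using hf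
  have hgc : Continuous g := hg.continuous
  have hgd : Differentiable ℝ g := hg.differentiable (by simp)
  have hg' : Continuous (fderiv ℝ g) := (hg.fderiv_right (m := ∞) (by simp)).continuous
  constructor
  · rw [hf', contDiff_infty]
    exact fun m => radial_contDiff m g hg l
  · intro x
    have hD := radial_hasFDerivAt g hg l x
    rw [← hf'] at hD
    have hint : IntervalIntegrable (fun s : ℝ => s ^ (l + 1) • fderiv ℝ g (s • x))
        volume 0 1 :=
      ((continuous_pow (l+1)).smul (hg'.comp (continuous_id.smul continuous_const))).intervalIntegrable _ _
    have happ : fderiv ℝ f x x = ∫ s in (0:ℝ)..1, s ^ (l + 1) * fderiv ℝ g (s • x) x := by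
      rw [hD.fderiv, ContinuousLinearMap.intervalIntegral_apply hint x]
      simp [smul_eq_mul]
    -- FTC for s ↦ s^(l+1) * g (s • x)
    have hderiv : ∀ s ∈ Set.uIcc (0:ℝ) 1,
        HasDerivAt (fun s : ℝ => s ^ (l + 1) * g (s • x))
          ((l + 1 : ℝ) * s ^ l * g (s • x) + s ^ (l + 1) * fderiv ℝ g (s • x) x) s := by
      intro s _
      have h1 : HasDerivAt (fun s : ℝ => s ^ (l + 1)) ((l + 1 : ℝ) * s ^ l) s := by
        simpa using hasDerivAt_pow (l + 1) s
      have h2 : HasDerivAt (fun s : ℝ => g (s • x)) (fderiv ℝ g (s • x) x) s := by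
        have hl : HasDerivAt (fun s : ℝ => s • x) x s := by
          simpa using (hasDerivAt_id s).smul_const x
        exact (hgd (s • x)).hasFDerivAt.comp_hasDerivAt s hl
      exact h1.mul h2
    have hcont : IntervalIntegrable
        (fun s : ℝ => (l + 1 : ℝ) * s ^ l * g (s • x) + s ^ (l + 1) * fderiv ℝ g (s • x) x)
        volume 0 1 := by
      apply Continuous.intervalIntegrable
      fun_prop
    have hftc := intervalIntegral.integral_eq_sub_of_hasDerivAt hderiv hcont
    simp only [one_pow, one_smul, zero_pow (Nat.succ_ne_zero l), zero_mul] at hftc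
    have hsplit : ∫ s in (0:ℝ)..1, ((l + 1 : ℝ) * s ^ l * g (s • x)
          + s ^ (l + 1) * fderiv ℝ g (s • x) x)
        = (l + 1 : ℝ) * (∫ s in (0:ℝ)..1, s ^ l * g (s • x))
          + ∫ s in (0:ℝ)..1, s ^ (l + 1) * fderiv ℝ g (s • x) x := by
      rw [intervalIntegral.integral_add ?_ ?_]
      · simp_rw [mul_assoc]
        rw [intervalIntegral.integral_const_mul]
      · apply Continuous.intervalIntegrable; fun_prop
      · apply Continuous.intervalIntegrable; fun_prop
    rw [hsplit] at hftc
    rw [happ, hf]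
    linarith [hftc]
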